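/- arXiv:2504.10909 — 2 statements merged into one kernel-verified Lean document; each statement's English description precedes it below -/
import Mathlib

section
/- Let ζ : V × V → ℝ, let k ≥ 2, and let a, b, c ∈ {1,…,k} be distinct indices with ζ(η_a,η_c) ≠ 0 and ζ(η_b,η_c) ≠ 0. Then the signed sum over all connected graphs G on {1,…,k} containing both edges (a,c) and (b,c) of (-1)^{|E(G)|} ∏_{(i,j)∈E(G)} ζ(η_i,η_j) vanishes, provided ζ(η_a,η_b) = 1. -/
open scoped Classical

noncomputable def graphWeight {V : Type*} (ζ : V → V → ℝ) {k : ℕ} (η : Fin k → V)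
    (G : SimpleGraph (Fin k)) : ℝ :=
  (-1 : ℝ) ^ (Finset.univ.filter (fun p : Fin k × Fin k => p.1 < p.2 ∧ G.Adj p.1 p.2)).card *
    ∏ p ∈ Finset.univ.filter (fun p : Fin k × Fin k => p.1 < p.2 ∧ G.Adj p.1 p.2),
      ζ (η p.1) (η p.2)

section Aux
variable {k : ℕ}

/-- The graph `G` with the edge `{a, b}` toggled. -/
def toggle (a b : Fin k) (hab : a ≠ b) (G : SimpleGraph (Fin k)) : SimpleGraph (Fin k) where
  Adj x y := Xor' (G.Adj x y) ((x = a ∧ y = b) ∨ (x = b ∧ y = a))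
  symm := by
    constructor
    intro x y h
    unfold Xor' Xor at *
    have hs : G.Adj x y ↔ G.Adj y x := G.adj_comm x y
    tauto
  loopless := by
    constructor
    intro x h
    unfold Xor' Xor at h
    have := G.loopless.irrefl x
    have : ¬(x = a ∧ x = b) := by rintro ⟨rfl, rfl⟩; exact hab rfl
    tauto

lemma toggle_toggle (a b : Fin k) (hab : a ≠ b) (G : SimpleGraph (Fin k)) :
    toggle a b hab (toggle a b hab G) = G := by
  ext x y
  simp only [toggle, Xor', Xor]
  tauto

lemma toggle_adj_of_ne (a b : Fin k) (hab : a ≠ b) (G : SimpleGraph (Fin k)) {x y : Fin k}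
    (h1 : ¬(x = a ∧ y = b)) (h2 : ¬(x = b ∧ y = a)) :
    (toggle a b hab G).Adj x y ↔ G.Adj x y := by
  simp only [toggle, Xor', Xor]
  tauto

lemma toggle_adj_ac (a b c : Fin k) (hab : a ≠ b) (hbc : b ≠ c) (G : SimpleGraph (Fin k)) :
    (toggle a b hab G).Adj a c ↔ G.Adj a c :=
  toggle_adj_of_ne a b hab G (by rintro ⟨_, h⟩; exact hbc h.symm)
    (by rintro ⟨rfl, rfl⟩; exact hab rfl)

lemma toggle_adj_bc (a b c : Fin k) (hab : a ≠ b) (hac : a ≠ c) (G : SimpleGraph (Fin k)) :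
    (toggle a b hab G).Adj b c ↔ G.Adj b c :=
  toggle_adj_of_ne a b hab G (by rintro ⟨rfl, rfl⟩; exact hab rfl)
    (by rintro ⟨_, h⟩; exact hac h.symm)

lemma toggle_connected (a b c : Fin k) (hab : a ≠ b) (hac : a ≠ c) (hbc : b ≠ c)
    (G : SimpleGraph (Fin k)) (hGac : G.Adj a c) (hGbc : G.Adj b c) (hconn : G.Connected) :
    (toggle a b hab G).Connected := by
  have tac : (toggle a b hab G).Adj a c := (toggle_adj_ac a b c hab hbc G).mpr hGac
  have tbc : (toggle a b hab G).Adj b c := (toggle_adj_bc a b c hab hac G).mpr hGbc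
  have key : ∀ {x y : Fin k}, G.Walk x y → (toggle a b hab G).Reachable x y := by
    intro x y w
    induction w with
    | nil => exact SimpleGraph.Reachable.refl _
    | @cons u v w h p ih =>
      refine SimpleGraph.Reachable.trans ?_ ih
      by_cases hc : (u = a ∧ v = b) ∨ (u = b ∧ v = a)
      · rcases hc with ⟨rfl, rfl⟩ | ⟨rfl, rfl⟩
        · exact tac.reachable.trans tbc.symm.reachable
        · exact tbc.reachable.trans tac.symm.reachable
      · push_neg at hc
        have hadj : (toggle a b hab G).Adj u v := by
          rw [toggle_adj_of_ne a b hab G (by tauto) (by tauto)]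
          exact h
        exact hadj.reachable
  have : Nonempty (Fin k) := hconn.nonempty
  exact ⟨fun x y => key (hconn.preconnected x y).some⟩

lemma edgeFinset_toggle (a b : Fin k) (hab : a ≠ b) (G : SimpleGraph (Fin k))
    (hnadj : ¬G.Adj a b) :
    Finset.univ.filter (fun p : Fin k × Fin k => p.1 < p.2 ∧ (toggle a b hab G).Adj p.1 p.2)
      = insert (if a < b then (a, b) else (b, a))
          (Finset.univ.filter (fun p : Fin k × Fin k => p.1 < p.2 ∧ G.Adj p.1 p.2)) := by
  have hnadj' : ¬G.Adj b a := fun h => hnadj h.symm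
  ext ⟨x, y⟩
  by_cases hlt : a < b
  · have hnlt : ¬(b < a) := asymm hlt
    simp only [Finset.mem_insert, Finset.mem_filter, Finset.mem_univ, true_and]
    simp only [toggle, Xor', Xor, Finset.mem_insert, Finset.mem_filter, Finset.mem_univ, true_and,
      if_pos hlt, Prod.mk.injEq]
    constructor
    · rintro ⟨hxy, ⟨hA, hP⟩ | ⟨hP, hA⟩⟩
      · exact Or.inr ⟨hxy, hA⟩
      · rcases hP with ⟨rfl, rfl⟩ | ⟨rfl, rfl⟩
        · exact Or.inl ⟨rfl, rfl⟩
        · exact absurd hxy hnlt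
    · rintro (⟨rfl, rfl⟩ | ⟨hxy, hA⟩)
      · exact ⟨hlt, Or.inr ⟨Or.inl ⟨rfl, rfl⟩, hnadj⟩⟩
      · refine ⟨hxy, Or.inl ⟨hA, ?_⟩⟩
        rintro (⟨rfl, rfl⟩ | ⟨rfl, rfl⟩)
        · exact hnadj hA
        · exact hnadj' hA
  · have hlt' : b < a := (lt_or_gt_of_ne hab).resolve_left hlt
    simp only [Finset.mem_insert, Finset.mem_filter, Finset.mem_univ, true_and]
    simp only [toggle, Xor', Xor, Finset.mem_insert, Finset.mem_filter, Finset.mem_univ, true_and,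
      if_neg hlt, Prod.mk.injEq]
    constructor
    · rintro ⟨hxy, ⟨hA, hP⟩ | ⟨hP, hA⟩⟩
      · exact Or.inr ⟨hxy, hA⟩
      · rcases hP with ⟨rfl, rfl⟩ | ⟨rfl, rfl⟩
        · exact absurd hxy hlt
        · exact Or.inl ⟨rfl, rfl⟩
    · rintro (⟨rfl, rfl⟩ | ⟨hxy, hA⟩)
      · exact ⟨hlt', Or.inr ⟨Or.inr ⟨rfl, rfl⟩, hnadj'⟩⟩
      · refine ⟨hxy, Or.inl ⟨hA, ?_⟩⟩
        rintro (⟨rfl, rfl⟩ | ⟨rfl, rfl⟩)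
        · exact hnadj hA
        · exact hnadj' hA

lemma graphWeight_toggle_aux {V : Type*} (ζ : V → V → ℝ) (η : Fin k → V)
    (hsymm : ∀ u v, ζ u v = ζ v u) (a b : Fin k) (hab : a ≠ b)
    (hab1 : ζ (η a) (η b) = 1) (G : SimpleGraph (Fin k)) (hnadj : ¬G.Adj a b) :
    graphWeight ζ η (toggle a b hab G) = - graphWeight ζ η G := by
  have hq : (if a < b then ((a, b) : Fin k × Fin k) else (b, a)) ∉
      Finset.univ.filter (fun p : Fin k × Fin k => p.1 < p.2 ∧ G.Adj p.1 p.2) := by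
    simp only [Finset.mem_filter, Finset.mem_univ, true_and, not_and]
    by_cases hlt : a < b
    · rw [if_pos hlt]; intro _ h; exact hnadj h
    · rw [if_neg hlt]; intro _ h; exact hnadj h.symm
  have hζq : ζ (η (if a < b then ((a, b) : Fin k × Fin k) else (b, a)).1)
      (η (if a < b then ((a, b) : Fin k × Fin k) else (b, a)).2) = 1 := by
    by_cases hlt : a < b <;> simp [hlt, hab1]
    rw [hsymm]; exact hab1
  unfold graphWeight
  rw [edgeFinset_toggle a b hab G hnadj, Finset.card_insert_of_notMem hq,
    Finset.prod_insert hq, hζq, pow_succ]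
  ring

lemma graphWeight_toggle {V : Type*} (ζ : V → V → ℝ) (η : Fin k → V)
    (hsymm : ∀ u v, ζ u v = ζ v u) (a b : Fin k) (hab : a ≠ b)
    (hab1 : ζ (η a) (η b) = 1) (G : SimpleGraph (Fin k)) :
    graphWeight ζ η (toggle a b hab G) = - graphWeight ζ η G := by
  by_cases hadj : G.Adj a b
  · have hnadj : ¬(toggle a b hab G).Adj a b := by
      simp [toggle, Xor', Xor, hadj]
    have := graphWeight_toggle_aux ζ η hsymm a b hab hab1 (toggle a b hab G) hnadj
    rw [toggle_toggle] at this
    linarith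
  · exact graphWeight_toggle_aux ζ η hsymm a b hab hab1 G hadj

lemma toggle_cond (a b c : Fin k) (hab : a ≠ b) (hac : a ≠ c) (hbc : b ≠ c)
    (G : SimpleGraph (Fin k)) (h : G.Connected ∧ G.Adj a c ∧ G.Adj b c) :
    (toggle a b hab G).Connected ∧ (toggle a b hab G).Adj a c ∧ (toggle a b hab G).Adj b c :=
  ⟨toggle_connected a b c hab hac hbc G h.2.1 h.2.2 h.1,
    (toggle_adj_ac a b c hab hbc G).mpr h.2.1, (toggle_adj_bc a b c hab hac G).mpr h.2.2⟩

end Aux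

/-- The signed sum over all connected graphs on `Fin k` containing the edges `(a,c)` and
`(b,c)` of `(-1)^{|E(G)|} ∏_{(i,j)∈E(G)} ζ(η_i,η_j)` vanishes, provided `ζ(η_a,η_b) = 1`. -/
theorem cancellation {V : Type*} (ζ : V → V → ℝ) (hsymm : ∀ u v, ζ u v = ζ v u)
    (k : ℕ) (hk : 2 ≤ k) (η : Fin k → V) (a b c : Fin k)
    (hab : a ≠ b) (hac : a ≠ c) (hbc : b ≠ c)
    (hac0 : ζ (η a) (η c) ≠ 0) (hbc0 : ζ (η b) (η c) ≠ 0)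
    (hab1 : ζ (η a) (η b) = 1) :
    (∑ G : SimpleGraph (Fin k),
        if G.Connected ∧ G.Adj a c ∧ G.Adj b c then graphWeight ζ η G else 0) = 0 := by
  refine Finset.sum_ninvolution (toggle a b hab) ?_ ?_ (fun _ => Finset.mem_univ _)
    (toggle_toggle a b hab)
  · intro G
    by_cases h : G.Connected ∧ G.Adj a c ∧ G.Adj b c
    · have h' := toggle_cond a b c hab hac hbc G h
      rw [if_pos h, if_pos h', graphWeight_toggle ζ η hsymm a b hab hab1 G]
      ring
    · have h' : ¬((toggle a b hab G).Connected ∧ (toggle a b hab G).Adj a c ∧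
          (toggle a b hab G).Adj b c) := by
        intro h'
        exact h (by simpa [toggle_toggle] using toggle_cond a b c hab hac hbc _ h')
      rw [if_neg h, if_neg h']
      ring
  · intro G _
    intro hEq
    have : (toggle a b hab G).Adj a b ↔ G.Adj a b := by rw [hEq]
    simp [toggle, Xor', Xor] at this
end

section
/- Let k ≥ 1 and let ζ : V × V → {0,2} on polymers, where for a distinguished polymer ω we have ζ(η,ω) = 2·𝟙(η ∼ ω) for η in a set S of polymers, with ∼ a fixed symmetric relation. Suppose the cluster C consists of the multiset S ∪ {ω} where ω interacts with exactly d elements of S (counted with multiplicity). Then the sum over connected graphs on C in which ω has degree exactly 1, of (-1)^{|E(G)|} ∏_{(i,j)∈E(G)} ζ(η_i,η_j), equals (-2)·d times the corresponding Ursell sum over connected graphs on S alone. -/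
open scoped Classical

section Helpers

variable {k : ℕ}

def pendant (j : Fin k) (G : SimpleGraph (Fin k)) : SimpleGraph (Fin (k + 1)) where
  Adj a b := (∃ a' b', G.Adj a' b' ∧ a = a'.castSucc ∧ b = b'.castSucc)
    ∨ (a = j.castSucc ∧ b = Fin.last k) ∨ (a = Fin.last k ∧ b = j.castSucc)
  symm := by
    constructor
    rintro a b (⟨a', b', h, rfl, rfl⟩ | ⟨rfl, rfl⟩ | ⟨rfl, rfl⟩)
    · exact Or.inl ⟨b', a', h.symm, rfl, rfl⟩
    · exact Or.inr (Or.inr ⟨rfl, rfl⟩)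
    · exact Or.inr (Or.inl ⟨rfl, rfl⟩)
  loopless := by
    constructor
    rintro a (⟨a', b', h, rfl, h2⟩ | ⟨rfl, h2⟩ | ⟨h1, h2⟩)
    · exact h.ne (Fin.castSucc_injective _ h2)
    · exact (Fin.castSucc_lt_last j).ne h2
    · exact (Fin.castSucc_lt_last j).ne' (h2.symm.trans h1).symm

lemma pendant_adj_castSucc (j : Fin k) (G : SimpleGraph (Fin k)) (a b : Fin k) :
    (pendant j G).Adj a.castSucc b.castSucc ↔ G.Adj a b := by
  constructor
  · rintro (⟨a', b', h, ha, hb⟩ | ⟨_, hb⟩ | ⟨ha, _⟩)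
    · rwa [Fin.castSucc_injective _ ha, Fin.castSucc_injective _ hb]
    · exact absurd hb.symm (Fin.castSucc_lt_last b).ne'
    · exact absurd ha (Fin.castSucc_lt_last a).ne
  · exact fun h => Or.inl ⟨a, b, h, rfl, rfl⟩

lemma pendant_adj_last (j : Fin k) (G : SimpleGraph (Fin k)) (a : Fin k) :
    (pendant j G).Adj a.castSucc (Fin.last k) ↔ a = j := by
  constructor
  · rintro (⟨a', b', h, ha, hb⟩ | ⟨ha, _⟩ | ⟨ha, _⟩)
    · exact absurd hb (Fin.castSucc_lt_last b').ne'
    · exact Fin.castSucc_injective _ ha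
    · exact absurd ha (Fin.castSucc_lt_last a).ne
  · rintro rfl; exact Or.inr (Or.inl ⟨rfl, rfl⟩)

lemma pendant_adj_last' (j : Fin k) (G : SimpleGraph (Fin k)) (a : Fin k) :
    (pendant j G).Adj (Fin.last k) a.castSucc ↔ a = j := by
  rw [SimpleGraph.adj_comm, pendant_adj_last]

lemma pendant_connected {j : Fin k} {G : SimpleGraph (Fin k)} (hG : G.Connected) :
    (pendant j G).Connected := by
  let φ : G →g pendant j G := ⟨Fin.castSucc, fun h => Or.inl ⟨_, _, h, rfl, rfl⟩⟩
  constructor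
  intro a b
  have hj : ∀ a : Fin (k + 1), (pendant j G).Reachable a j.castSucc := by
    intro a
    refine Fin.lastCases ?_ ?_ a
    · exact ((pendant_adj_last' j G j).2 rfl).reachable
    · intro i; exact (hG.preconnected i j).map φ
  exact (hj a).trans (hj b).symm

lemma pendant_reach_aux (j : Fin k) (G : SimpleGraph (Fin k)) :
    ∀ {u v : Fin (k + 1)} (_ : (pendant j G).Walk u v) (b : Fin k) (_ : v = b.castSucc),
      (∀ a, u = a.castSucc → G.Reachable a b) ∧ (u = Fin.last k → G.Reachable j b) := by
  intro u v w
  induction w with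
  | nil =>
    rintro b rfl
    refine ⟨fun a ha => ?_, fun h => absurd h (Fin.castSucc_lt_last b).ne⟩
    cases Fin.castSucc_injective _ ha
    exact SimpleGraph.Reachable.refl b
  | @cons u x _ h w ih =>
    rintro b rfl
    have ih := ih b rfl
    rcases h with ⟨a', c', hadj, rfl, rfl⟩ | ⟨rfl, rfl⟩ | ⟨rfl, rfl⟩
    · refine ⟨fun a ha => ?_, fun h => absurd h (Fin.castSucc_lt_last a').ne⟩
      cases Fin.castSucc_injective _ ha
      exact hadj.reachable.trans (ih.1 c' rfl)
    · refine ⟨fun a ha => ?_, fun h => absurd h (Fin.castSucc_lt_last j).ne⟩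
      cases Fin.castSucc_injective _ ha
      exact ih.2 rfl
    · exact ⟨fun a ha => absurd ha.symm (Fin.castSucc_lt_last a).ne, fun _ => ih.1 j rfl⟩

lemma connected_of_pendant (hk : 1 ≤ k) {j : Fin k} {G : SimpleGraph (Fin k)}
    (hG : (pendant j G).Connected) : G.Connected := by
  have : Nonempty (Fin k) := ⟨⟨0, hk⟩⟩
  refine ⟨fun a b => ?_⟩
  obtain ⟨w⟩ := hG.preconnected a.castSucc b.castSucc
  exact (pendant_reach_aux j G w b rfl).1 a rfl

lemma pendant_neighborFinset (j : Fin k) (G : SimpleGraph (Fin k)) :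
    (pendant j G).neighborFinset (Fin.last k) = {j.castSucc} := by
  ext x
  rw [SimpleGraph.mem_neighborFinset, Finset.mem_singleton]
  refine Fin.lastCases ?_ ?_ x
  · simp only [SimpleGraph.irrefl]
    exact iff_of_false (by simp) (Fin.castSucc_lt_last j).ne'
  · intro i
    rw [pendant_adj_last']
    exact ⟨fun h => by rw [h], fun h => Fin.castSucc_injective _ h⟩

lemma pendant_degree (j : Fin k) (G : SimpleGraph (Fin k)) :
    (pendant j G).degree (Fin.last k) = 1 := by
  rw [← SimpleGraph.card_neighborFinset_eq_degree, pendant_neighborFinset,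
    Finset.card_singleton]

lemma comap_pendant (j : Fin k) (G : SimpleGraph (Fin k)) :
    (pendant j G).comap Fin.castSucc = G := by
  ext a b
  exact pendant_adj_castSucc j G a b

lemma eq_pendant {G : SimpleGraph (Fin (k + 1))} {j : Fin k}
    (hadj : G.Adj (Fin.last k) j.castSucc) (hdeg : G.degree (Fin.last k) = 1) :
    G = pendant j (G.comap Fin.castSucc) := by
  have hnbh : G.neighborFinset (Fin.last k) = {j.castSucc} := by
    refine (Finset.eq_of_subset_of_card_le ?_ ?_).symm
    · simpa [Finset.singleton_subset_iff, SimpleGraph.mem_neighborFinset] using hadj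
    · rw [Finset.card_singleton, SimpleGraph.card_neighborFinset_eq_degree, hdeg]
  have hnb : ∀ x, G.Adj (Fin.last k) x ↔ x = j.castSucc := by
    intro x
    rw [← SimpleGraph.mem_neighborFinset, hnbh, Finset.mem_singleton]
  ext a b
  refine Fin.lastCases ?_ ?_ a
  · refine Fin.lastCases ?_ ?_ b
    · simp only [SimpleGraph.irrefl]
    · intro i
      rw [hnb, pendant_adj_last']
      exact Fin.castSucc_inj
  · intro i
    refine Fin.lastCases ?_ ?_ b
    · rw [SimpleGraph.adj_comm, hnb, pendant_adj_last]
      exact Fin.castSucc_inj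
    · intro i'
      rw [pendant_adj_castSucc]
      exact Iff.rfl

lemma pendant_edgeFilter (j : Fin k) (G : SimpleGraph (Fin k)) :
    (Finset.univ.filter
        (fun p : Fin (k + 1) × Fin (k + 1) => p.1 < p.2 ∧ (pendant j G).Adj p.1 p.2))
      = insert (j.castSucc, Fin.last k)
          ((Finset.univ.filter (fun p : Fin k × Fin k => p.1 < p.2 ∧ G.Adj p.1 p.2)).image
            (fun p => (p.1.castSucc, p.2.castSucc))) := by
  ext p
  simp only [Finset.mem_filter, Finset.mem_univ, true_and, Finset.mem_insert, Finset.mem_image]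
  constructor
  · rintro ⟨hlt, ⟨a', b', h, ha, hb⟩ | ⟨ha, hb⟩ | ⟨ha, hb⟩⟩
    · refine Or.inr ⟨(a', b'), ⟨?_, h⟩, ?_⟩
      · rw [ha, hb] at hlt
        exact Fin.castSucc_lt_castSucc_iff.1 hlt
      · rw [Prod.ext_iff]
        exact ⟨ha.symm, hb.symm⟩
    · refine Or.inl ?_
      rw [Prod.ext_iff]
      exact ⟨ha, hb⟩
    · rw [ha, hb] at hlt
      exact absurd hlt (Fin.castSucc_lt_last j).asymm
  · rintro (rfl | ⟨q, ⟨hlt, h⟩, rfl⟩)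
    · exact ⟨Fin.castSucc_lt_last j, Or.inr (Or.inl ⟨rfl, rfl⟩)⟩
    · exact ⟨Fin.castSucc_lt_castSucc_iff.2 hlt, Or.inl ⟨q.1, q.2, h, rfl, rfl⟩⟩

lemma castSucc_pair_injective :
    Function.Injective (fun p : Fin k × Fin k => (p.1.castSucc, p.2.castSucc)) := by
  rintro ⟨a, b⟩ ⟨c, d⟩ h
  rw [Prod.ext_iff] at h ⊢
  exact ⟨Fin.castSucc_injective _ h.1, Fin.castSucc_injective _ h.2⟩

lemma weight_pendant {V : Type*} (ζ : V → V → ℝ) (η : Fin k → V) (ω : V)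
    (j : Fin k) (G : SimpleGraph (Fin k)) :
    graphWeight ζ (Fin.snoc η ω) (pendant j G) = -(ζ (η j) ω) * graphWeight ζ η G := by
  have hnm : (j.castSucc, Fin.last k) ∉
      (Finset.univ.filter (fun p : Fin k × Fin k => p.1 < p.2 ∧ G.Adj p.1 p.2)).image
        (fun p => (p.1.castSucc, p.2.castSucc)) := by
    simp only [Finset.mem_image, not_exists, Prod.ext_iff]
    rintro q ⟨-, -, h2⟩
    exact (Fin.castSucc_lt_last q.2).ne h2
  simp only [graphWeight, pendant_edgeFilter, Finset.card_insert_of_notMem hnm,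
    Finset.prod_insert hnm,
    Finset.card_image_of_injective _ castSucc_pair_injective,
    Finset.prod_image (fun a _ b _ h => castSucc_pair_injective h)]
  simp only [Fin.snoc_castSucc, Fin.snoc_last]
  rw [pow_succ]
  ring

end Helpers

/-- Degree-one reduction: if the distinguished polymer `ω` carries edge weight
`ζ(η,ω) = 2·𝟙(η ∼ ω)`, then the signed sum over connected graphs on `S ∪ {ω}` in which `ω`
has degree exactly `1` equals `(-2)·d` times the Ursell sum over connected graphs on `S`,
where `d` is the number of elements of `S` interacting with `ω`. -/
theorem degree_one_reduction {V : Type*} (ζ : V → V → ℝ) (R : V → V → Prop)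
    (k : ℕ) (hk : 1 ≤ k) (η : Fin k → V) (ω : V)
    (hωη : ∀ i : Fin k, ζ (η i) ω = if R (η i) ω then 2 else 0)
    (hηω : ∀ i : Fin k, ζ ω (η i) = if R (η i) ω then 2 else 0) :
    (∑ G : SimpleGraph (Fin (k + 1)),
        if G.Connected ∧ G.degree (Fin.last k) = 1 then graphWeight ζ (Fin.snoc η ω) G else 0)
      = (-2) * ((Finset.univ.filter fun i : Fin k => R (η i) ω).card : ℝ) *
          ∑ G : SimpleGraph (Fin k), if G.Connected then graphWeight ζ η G else 0 := by
  classical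
  set T : Finset (Fin k × SimpleGraph (Fin k)) :=
    (Finset.univ : Finset (Fin k)) ×ˢ
      Finset.univ.filter (fun G : SimpleGraph (Fin k) => G.Connected) with hT
  have key : (∑ G : SimpleGraph (Fin (k + 1)),
        if G.Connected ∧ G.degree (Fin.last k) = 1 then graphWeight ζ (Fin.snoc η ω) G else 0)
      = ∑ p ∈ T, -(ζ (η p.1) ω) * graphWeight ζ η p.2 := by
    rw [← Finset.sum_filter]
    refine Finset.sum_nbij'
      (i := fun G : SimpleGraph (Fin (k + 1)) =>
        ((if h : ∃ i : Fin k, G.Adj (Fin.last k) i.castSucc then h.choose else ⟨0, hk⟩),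
          G.comap Fin.castSucc))
      (j := fun p : Fin k × SimpleGraph (Fin k) => pendant p.1 p.2)
      ?_ ?_ ?_ ?_ ?_
    · intro G hG
      rw [Finset.mem_filter] at hG
      obtain ⟨-, hconn, hdeg⟩ := hG
      obtain ⟨x, hx⟩ : ∃ x, G.Adj (Fin.last k) x := by
        have h1 : (G.neighborFinset (Fin.last k)).Nonempty := by
          rw [← Finset.card_pos, SimpleGraph.card_neighborFinset_eq_degree, hdeg]
          norm_num
        obtain ⟨x, hx⟩ := h1
        exact ⟨x, (SimpleGraph.mem_neighborFinset _ _ _).1 hx⟩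
      obtain ⟨j0, rfl⟩ := Fin.exists_castSucc_eq.2 (G.ne_of_adj hx).symm
      have hex : ∃ i : Fin k, G.Adj (Fin.last k) i.castSucc := ⟨j0, hx⟩
      have hspec := hex.choose_spec
      have hGeq := eq_pendant hspec hdeg
      rw [hT, Finset.mem_product, Finset.mem_filter]
      refine ⟨Finset.mem_univ _, Finset.mem_univ _, ?_⟩
      exact connected_of_pendant hk (hGeq ▸ hconn)
    · intro p hp
      rw [hT, Finset.mem_product, Finset.mem_filter] at hp
      rw [Finset.mem_filter]
      exact ⟨Finset.mem_univ _, pendant_connected hp.2.2, pendant_degree p.1 p.2⟩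
    · intro G hG
      rw [Finset.mem_filter] at hG
      obtain ⟨-, hconn, hdeg⟩ := hG
      obtain ⟨x, hx⟩ : ∃ x, G.Adj (Fin.last k) x := by
        have h1 : (G.neighborFinset (Fin.last k)).Nonempty := by
          rw [← Finset.card_pos, SimpleGraph.card_neighborFinset_eq_degree, hdeg]
          norm_num
        obtain ⟨x, hx⟩ := h1
        exact ⟨x, (SimpleGraph.mem_neighborFinset _ _ _).1 hx⟩
      obtain ⟨j0, rfl⟩ := Fin.exists_castSucc_eq.2 (G.ne_of_adj hx).symm
      have hex : ∃ i : Fin k, G.Adj (Fin.last k) i.castSucc := ⟨j0, hx⟩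
      simp only [dif_pos hex]
      exact (eq_pendant hex.choose_spec hdeg).symm
    · intro p hp
      have hex : ∃ i : Fin k, (pendant p.1 p.2).Adj (Fin.last k) i.castSucc :=
        ⟨p.1, (pendant_adj_last' p.1 p.2 p.1).2 rfl⟩
      simp only [dif_pos hex]
      have h1 : hex.choose = p.1 := (pendant_adj_last' p.1 p.2 _).1 hex.choose_spec
      rw [Prod.ext_iff]
      exact ⟨h1, comap_pendant p.1 p.2⟩
    · intro G hG
      rw [Finset.mem_filter] at hG
      obtain ⟨-, hconn, hdeg⟩ := hG
      obtain ⟨x, hx⟩ : ∃ x, G.Adj (Fin.last k) x := by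
        have h1 : (G.neighborFinset (Fin.last k)).Nonempty := by
          rw [← Finset.card_pos, SimpleGraph.card_neighborFinset_eq_degree, hdeg]
          norm_num
        obtain ⟨x, hx⟩ := h1
        exact ⟨x, (SimpleGraph.mem_neighborFinset _ _ _).1 hx⟩
      obtain ⟨j0, rfl⟩ := Fin.exists_castSucc_eq.2 (G.ne_of_adj hx).symm
      have hex : ∃ i : Fin k, G.Adj (Fin.last k) i.castSucc := ⟨j0, hx⟩
      simp only [dif_pos hex]
      conv_lhs => rw [eq_pendant hex.choose_spec hdeg]
      exact weight_pendant ζ η ω _ _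
  rw [key, hT, Finset.sum_product]
  have h2 : ∀ x : Fin k,
      (∑ G ∈ Finset.univ.filter (fun G : SimpleGraph (Fin k) => G.Connected),
        -(ζ (η x) ω) * graphWeight ζ η G)
      = -(ζ (η x) ω) *
          ∑ G : SimpleGraph (Fin k), if G.Connected then graphWeight ζ η G else 0 := by
    intro x
    rw [← Finset.mul_sum, Finset.sum_filter]
  simp only [h2]
  rw [← Finset.sum_mul]
  have h3 : (∑ x : Fin k, -(ζ (η x) ω))
      = (-2) * ((Finset.univ.filter fun i : Fin k => R (η i) ω).card : ℝ) := by
    have : ∀ x : Fin k, -(ζ (η x) ω) = if R (η x) ω then (-2 : ℝ) else 0 := by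
      intro x
      rw [hωη x]
      split <;> simp
    simp only [this]
    rw [Finset.sum_ite, Finset.sum_const, Finset.sum_const, smul_zero, add_zero,
      nsmul_eq_mul]
    ring
  rw [h3]
end
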